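/- Let C be a cocomplete category admitting a small dense subcategory. Then every cocontinuous functor S : C → B has a right adjoint. -/

import Mathlib

/-!
STATEMENT 9 (Kelly, Thm 5.33):
Let `C` be a cocomplete category admitting a small dense subcategory.
Then every cocontinuous functor `S : C ⥤ B` has a right adjoint.

A subcategory is encoded as a fully faithful functor `ι : D ⥤ C` from a small
category; density of `ι` means that the restricted Yoneda functor
`C ⥤ (Dᵒᵖ ⥤ Type v)` is fully faithful.
-/

open CategoryTheory CategoryTheory.Limits

universe v u u'

/-- The restricted Yoneda functor along `ι : D ⥤ C`, sending `X : C` to the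
presheaf `d ↦ C(ι d, X)` on `D`. -/
noncomputable def restrictedYonedaAlong {C : Type u} [Category.{v} C]
    {D : Type v} [SmallCategory D] (ι : D ⥤ C) : C ⥤ (Dᵒᵖ ⥤ Type v) :=
  yoneda ⋙ (Functor.whiskeringLeft Dᵒᵖ Cᵒᵖ (Type v)).obj ι.op

/-- A colimit-preserving functor out of a presheaf category is a pointwise left
Kan extension of its restriction along the Yoneda embedding. -/
noncomputable def aux_pointwise {D : Type v} [SmallCategory D] {B : Type u'} [Category.{v} B]
    (T : (Dᵒᵖ ⥤ Type v) ⥤ B) [PreservesColimitsOfSize.{v, v} T] :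
    (Functor.LeftExtension.mk T (𝟙 (uliftYoneda.{v} ⋙ T))).IsPointwiseLeftKanExtension := by
  haveI : uliftYoneda.{v}.HasPointwiseLeftKanExtension (uliftYoneda.{v} ⋙ T) := fun P => by
    let e : (CategoryOfElements.costructuredArrowULiftYonedaEquivalence P).functor ⋙
        CostructuredArrow.proj uliftYoneda.{v} P ⋙ (uliftYoneda.{v} ⋙ T) ≅
          Presheaf.functorToRepresentables.{v} P ⋙ T :=
      Functor.isoWhiskerLeft _ (Functor.isoWhiskerLeft _ (asIso (𝟙 (uliftYoneda.{v} ⋙ T)))) ≪≫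
        Functor.isoWhiskerLeft _ (Functor.associator _ _ _).symm ≪≫
        (Functor.associator _ _ _).symm ≪≫ Functor.isoWhiskerRight (Iso.refl _) T
    haveI : HasColimit (Presheaf.functorToRepresentables.{v} P ⋙ T) :=
      ⟨⟨⟨_, isColimitOfPreserves T (Presheaf.colimitOfRepresentable.{v} P)⟩⟩⟩
    haveI := hasColimit_of_iso e.symm
    exact hasColimit_of_equivalence_comp
      (CategoryOfElements.costructuredArrowULiftYonedaEquivalence P)
  exact Functor.isPointwiseLeftKanExtensionOfIsLeftKanExtension T (𝟙 _)

theorem statement9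
    {C : Type u} [Category.{v} C] {B : Type u'} [Category.{v} B]
    [HasColimits C]
    -- a small dense subcategory:
    {D : Type v} [SmallCategory D] (ι : D ⥤ C) (hfull : ι.Full) (hfaithful : ι.Faithful)
    (hdenseFull : (restrictedYonedaAlong ι).Full)
    (hdenseFaithful : (restrictedYonedaAlong ι).Faithful)
    -- a cocontinuous functor:
    (S : C ⥤ B) (hS : PreservesColimits S) :
    S.IsLeftAdjoint := by
  haveI := hfull; haveI := hfaithful; haveI := hdenseFull; haveI := hdenseFaithful; haveI := hS
  -- the left adjoint of the restricted yoneda functor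
  let Lan : (Dᵒᵖ ⥤ Type v) ⥤ C := uliftYoneda.{v}.leftKanExtension ι
  let adj1 : Lan ⊣ restrictedYonedaAlong ι :=
    (Presheaf.uliftYonedaAdjunction.{v} _ (uliftYoneda.{v}.leftKanExtensionUnit ι)).ofNatIsoRight
      (Functor.isoWhiskerRight uliftYonedaIsoYoneda.{v} _)
  haveI : IsIso adj1.counit := adj1.counit_isIso_of_R_fully_faithful
  -- the composite functor `Lan ⋙ S` preserves colimits, hence is a left adjoint:
  let T : (Dᵒᵖ ⥤ Type v) ⥤ B := Lan ⋙ S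
  haveI : PreservesColimitsOfSize.{v, v} Lan := adj1.leftAdjoint_preservesColimits
  haveI : PreservesColimitsOfSize.{v, v} T := inferInstanceAs (PreservesColimits (Lan ⋙ S))
  have hpt := aux_pointwise T
  haveI := hpt.hasPointwiseLeftKanExtension
  haveI := hpt.isLeftKanExtension
  let G : B ⥤ (Dᵒᵖ ⥤ Type v) := Presheaf.restrictedULiftYoneda.{v} (uliftYoneda.{v} ⋙ T)
  let adj2 : T ⊣ G := Presheaf.uliftYonedaAdjunction.{v} T (𝟙 _)
  -- `Lan` inverts the unit of `adj1`:
  have hLanUnit : ∀ P, IsIso (Lan.map (adj1.unit.app P)) := fun P => by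
    haveI : IsIso (adj1.counit.app (Lan.obj P)) := inferInstance
    haveI : IsIso (𝟙 (Lan.obj P)) := inferInstance
    exact IsIso.of_isIso_fac_right (adj1.left_triangle_components P)
  have hTu : ∀ P, IsIso (T.map (adj1.unit.app P)) := fun P => by
    haveI := hLanUnit P
    exact inferInstanceAs (IsIso (S.map (Lan.map (adj1.unit.app P))))
  -- the unit of `adj1` is invertible at any `G.obj b`:
  have hunit : ∀ b : B, IsIso (adj1.unit.app (G.obj b)) := by
    intro b
    haveI := hTu (G.obj b)
    let u : G.obj b ⟶ (Lan ⋙ restrictedYonedaAlong ι).obj (G.obj b) := adj1.unit.app (G.obj b)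
    let r : (Lan ⋙ restrictedYonedaAlong ι).obj (G.obj b) ⟶ G.obj b :=
      (adj2.homEquiv _ b) (inv (T.map u) ≫ adj2.counit.app b)
    have h1 : u ≫ r = 𝟙 (G.obj b) := by
      dsimp only [r]
      rw [← Adjunction.homEquiv_naturality_left]
      simp [Adjunction.homEquiv_unit]
    have h2 : r ≫ u = 𝟙 _ := by
      have inj : ∀ f g : (Lan ⋙ restrictedYonedaAlong ι).obj (G.obj b) ⟶
          (Lan ⋙ restrictedYonedaAlong ι).obj (G.obj b), u ≫ f = u ≫ g → f = g := by
        intro f g hfg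
        have h := congrArg ((adj1.homEquiv (G.obj b) (Lan.obj (G.obj b))).symm) hfg
        simp only [Adjunction.homEquiv_naturality_left_symm] at h
        haveI := hLanUnit (G.obj b)
        exact ((adj1.homEquiv _ _).symm.injective ((cancel_epi (Lan.map u)).mp h))
      apply inj
      rw [← Category.assoc, h1, Category.id_comp, Category.comp_id]
    exact ⟨⟨r, h1, h2⟩⟩
  -- construct the adjunction for `S`:
  refine ⟨⟨G ⋙ Lan, ⟨Adjunction.mkOfHomEquiv ?_⟩⟩⟩
  haveI : ∀ X : C, IsIso (adj1.counit.app X) := fun X => inferInstance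
  refine
    { homEquiv := fun X b =>
        haveI := hunit b
        (((S.mapIso (asIso (adj1.counit.app X))).symm.homCongr (Iso.refl b)).trans
          (adj2.homEquiv ((restrictedYonedaAlong ι).obj X) b)).trans
          (((Iso.refl ((restrictedYonedaAlong ι).obj X)).homCongr
              (asIso (adj1.unit.app (G.obj b)))).trans
            ((Functor.FullyFaithful.ofFullyFaithful (restrictedYonedaAlong ι)).homEquiv (X := X)
              (Y := Lan.obj (G.obj b))).symm)
      homEquiv_naturality_left_symm := ?_
      homEquiv_naturality_right := ?_ }
  · intro X' X b f y
    haveI := hunit b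
    simp only [Equiv.symm_trans_apply, Iso.homCongr_symm, Iso.homCongr,
      Equiv.coe_fn_mk, Equiv.coe_fn_symm_mk, Equiv.symm_symm,
      Iso.symm_hom, Iso.symm_inv, Iso.refl_hom, Iso.refl_inv, Functor.mapIso_hom,
      Functor.mapIso_inv, asIso_hom, asIso_inv, Category.comp_id, Category.id_comp,
      Iso.symm_symm_eq, Adjunction.homEquiv, Functor.map_comp, Category.assoc]
    change S.map (inv (adj1.counit.app X')) ≫
        T.map ((restrictedYonedaAlong ι).map (f ≫ y)) ≫
          T.map (inv (adj1.unit.app (G.obj b))) ≫ adj2.counit.app b =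
      S.map f ≫ S.map (inv (adj1.counit.app X)) ≫
        T.map ((restrictedYonedaAlong ι).map y) ≫
          T.map (inv (adj1.unit.app (G.obj b))) ≫ adj2.counit.app b
    have keyC : inv (adj1.counit.app X') ≫ Lan.map ((restrictedYonedaAlong ι).map f)
        = f ≫ inv (adj1.counit.app X) := by
      have h := adj1.counit.naturality f
      simp only [Functor.comp_map, Functor.id_map] at h
      rw [IsIso.inv_comp_eq, ← Category.assoc, IsIso.eq_comp_inv]
      exact h
    have keyS : S.map (inv (adj1.counit.app X')) ≫ T.map ((restrictedYonedaAlong ι).map f)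
        = S.map f ≫ S.map (inv (adj1.counit.app X)) := by
      show S.map _ ≫ S.map (Lan.map _) = _
      rw [← S.map_comp, ← S.map_comp, keyC]
    rw [(restrictedYonedaAlong ι).map_comp, T.map_comp]
    simp only [Category.assoc]
    rw [← Category.assoc, keyS, Category.assoc]
  · intro X b b' f g
    haveI := hunit b
    haveI := hunit b'
    apply (restrictedYonedaAlong ι).map_injective
    have hnat := adj1.unit.naturality (G.map g)
    simp only [Functor.id_map, Functor.comp_map] at hnat
    simp only [Equiv.trans_apply, Iso.homCongr, Equiv.coe_fn_mk, Equiv.coe_fn_symm_mk,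
      Iso.refl_inv, Iso.refl_hom, Iso.symm_inv, Category.comp_id, Category.id_comp,
      Functor.mapIso_hom, asIso_hom, Adjunction.homEquiv, Functor.map_comp, Category.assoc]
    rw [hnat]
    refine ((Functor.FullyFaithful.ofFullyFaithful
      (restrictedYonedaAlong ι)).map_preimage _).trans ?_
    refine Eq.trans ?_ (congrArg
      (fun t => t ≫ (restrictedYonedaAlong ι).map ((G ⋙ Lan).map g))
      ((Functor.FullyFaithful.ofFullyFaithful
        (restrictedYonedaAlong ι)).map_preimage _).symm)
    simp only [Functor.comp_map, Category.assoc]
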